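/- arXiv:0805.4559 — 4 statements merged into one kernel-verified Lean document; each statement's English description precedes it below -/
import Mathlib

section
/- Let Γ ⊆ ℕ^n be a sub-semigroup generating a subgroup of finite index in ℤ^n, with Σ(Γ) the closed convex cone it generates, and let L ⊆ ℝ^n be a linear subspace defined over ℚ that meets the interior of Σ(Γ). Then Σ(Γ) ∩ L equals the closed convex cone generated by Γ ∩ L. -/
/-- The smallest closed convex cone containing a set `S`. -/
def closedConvexConeGen {E : Type*} [AddCommMonoid E] [Module ℝ E] [TopologicalSpace E]
    (S : Set E) : Set E :=
  ⋂₀ {C : Set E | S ⊆ C ∧ IsClosed C ∧ Convex ℝ C ∧ ∀ r : ℝ, 0 ≤ r → ∀ x ∈ C, r • x ∈ C}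

section Basic
variable {E : Type*} [AddCommGroup E] [Module ℝ E] [TopologicalSpace E] (S : Set E)

lemma ccc_min {C : Set E} (h1 : S ⊆ C) (h2 : IsClosed C) (h3 : Convex ℝ C)
    (h4 : ∀ r : ℝ, 0 ≤ r → ∀ x ∈ C, r • x ∈ C) : closedConvexConeGen S ⊆ C :=
  Set.sInter_subset_of_mem ⟨h1, h2, h3, h4⟩

lemma subset_ccc : S ⊆ closedConvexConeGen S :=
  Set.subset_sInter fun _ hC => hC.1

lemma ccc_isClosed : IsClosed (closedConvexConeGen S) :=
  isClosed_sInter fun _ hC => hC.2.1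

lemma ccc_convex : Convex ℝ (closedConvexConeGen S) :=
  convex_sInter fun _ hC => hC.2.2.1

lemma ccc_smul_mem {r : ℝ} (hr : 0 ≤ r) {x : E} (hx : x ∈ closedConvexConeGen S) :
    r • x ∈ closedConvexConeGen S :=
  Set.mem_sInter.2 fun C hC => hC.2.2.2 r hr x (Set.mem_sInter.1 hx C hC)

lemma ccc_mono {S T : Set E} (h : S ⊆ T) : closedConvexConeGen S ⊆ closedConvexConeGen T :=
  ccc_min S (h.trans (subset_ccc T)) (ccc_isClosed T) (ccc_convex T)
    (fun r hr x hx => ccc_smul_mem T hr hx)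

/-- conic hull -/
def conicH (S : Set E) : Set E := {x | ∃ c : ℝ, 0 ≤ c ∧ ∃ y ∈ convexHull ℝ S, x = c • y}

lemma conicH_convex : Convex ℝ (conicH S) := by
  rintro x ⟨c1, hc1, y1, hy1, rfl⟩ z ⟨c2, hc2, y2, hy2, rfl⟩ a b ha hb hab
  rcases eq_or_lt_of_le (by positivity : (0:ℝ) ≤ a * c1 + b * c2) with h | h
  · have h1 : a * c1 = 0 := by nlinarith [mul_nonneg ha hc1, mul_nonneg hb hc2]
    have h2 : b * c2 = 0 := by nlinarith [mul_nonneg ha hc1, mul_nonneg hb hc2]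
    refine ⟨0, le_refl 0, y1, hy1, ?_⟩
    simp [smul_smul, h1, h2]
  · set c := a * c1 + b * c2 with hc
    refine ⟨c, le_of_lt h, (a * c1 / c) • y1 + (b * c2 / c) • y2, ?_, ?_⟩
    · apply (convex_convexHull ℝ S) hy1 hy2 (by positivity) (by positivity)
      field_simp
      exact hc.symm
    · rw [smul_add, smul_smul, smul_smul, smul_smul, smul_smul]
      rw [mul_div_cancel₀ _ (ne_of_gt h), mul_div_cancel₀ _ (ne_of_gt h)]

lemma conicH_subset_ccc : conicH S ⊆ closedConvexConeGen S := by
  rintro x ⟨c, hc, y, hy, rfl⟩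
  apply ccc_smul_mem S hc
  have : convexHull ℝ S ⊆ closedConvexConeGen S :=
    convexHull_min (subset_ccc S) (ccc_convex S)
  exact this hy

lemma subset_conicH : S ⊆ conicH S :=
  fun x hx => ⟨1, zero_le_one, x, subset_convexHull ℝ S hx, (one_smul ℝ x).symm⟩

lemma conicH_mem_elim {x : E} (hx : x ∈ conicH S) :
    ∃ (ι : Type) (t : Finset ι) (w : ι → ℝ) (z : ι → E), (∀ i ∈ t, 0 ≤ w i) ∧
      (∀ i ∈ t, z i ∈ S) ∧ x = ∑ i ∈ t, w i • z i := by
  obtain ⟨c, hc, y, hy, rfl⟩ := hx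
  rw [convexHull_eq] at hy
  obtain ⟨ι, t, w, z, hw0, hw1, hz, rfl⟩ := hy
  refine ⟨ι, t, fun i => c * w i, z, fun i hi => mul_nonneg hc (hw0 i hi), hz, ?_⟩
  rw [Finset.centerMass, hw1, inv_one, one_smul, Finset.smul_sum]
  exact Finset.sum_congr rfl fun i hi => (smul_smul c (w i) (z i))

lemma conicH_mem_intro (hS : S.Nonempty) {ι : Type*} (t : Finset ι) (w : ι → ℝ) (z : ι → E)
    (hw0 : ∀ i ∈ t, 0 ≤ w i) (hz : ∀ i ∈ t, z i ∈ S) :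
    (∑ i ∈ t, w i • z i) ∈ conicH S := by
  rcases eq_or_lt_of_le (Finset.sum_nonneg hw0) with h | h
  · have : ∀ i ∈ t, w i = 0 := by
      intro i hi
      exact (Finset.sum_eq_zero_iff_of_nonneg hw0).1 h.symm i hi
    obtain ⟨y, hy⟩ := hS
    refine ⟨0, le_refl 0, y, subset_convexHull ℝ S hy, ?_⟩
    rw [zero_smul]
    exact Finset.sum_eq_zero fun i hi => by rw [this i hi, zero_smul]
  · refine ⟨∑ i ∈ t, w i, le_of_lt h, t.centerMass w z,
      Finset.centerMass_mem_convexHull t hw0 h hz, ?_⟩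
    rw [Finset.centerMass, smul_smul, mul_inv_cancel₀ (ne_of_gt h), one_smul]

end Basic

section Cl
variable {E : Type*} [AddCommGroup E] [Module ℝ E] [TopologicalSpace E]
  [IsTopologicalAddGroup E] [ContinuousSMul ℝ E] (S : Set E)

lemma ccc_eq_closure_conicH : closedConvexConeGen S = closure (conicH S) := by
  apply le_antisymm
  · apply ccc_min
    · exact (subset_conicH S).trans subset_closure
    · exact isClosed_closure
    · exact (conicH_convex S).closure
    · intro r hr x hx
      have : Continuous fun y : E => r • y := continuous_const_smul r
      have hmap : (fun y : E => r • y) '' conicH S ⊆ conicH S := by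
        rintro _ ⟨y, ⟨c, hc, z, hz, rfl⟩, rfl⟩
        exact ⟨r * c, mul_nonneg hr hc, z, hz, smul_smul r c z⟩
      have h1 : r • x ∈ (fun y : E => r • y) '' closure (conicH S) := ⟨x, hx, rfl⟩
      have h2 := image_closure_subset_closure_image (s := conicH S) this
      exact closure_mono hmap (h2 h1)
  · exact closure_minimal (conicH_subset_ccc S) (ccc_isClosed S)
end Cl

variable {n : ℕ}

/-- cast map as a ℚ-linear map -/
def castQR (n : ℕ) : (Fin n → ℚ) →ₗ[ℚ] (Fin n → ℝ) where
  toFun q := fun i => (q i : ℝ)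
  map_add' x y := by ext i; simp only [Pi.add_apply]; push_cast; ring
  map_smul' a x := by
    ext i
    simp only [Pi.smul_apply, RingHom.id_apply, smul_eq_mul]
    rw [Rat.smul_def]
    push_cast; ring

lemma rat_dense_in_span (S : Set (Fin n → ℚ)) {y : Fin n → ℝ}
    (hy : y ∈ Submodule.span ℝ ((fun q : Fin n → ℚ => ((fun i => (q i : ℝ)) : Fin n → ℝ)) '' S))
    {ε : ℝ} (hε : 0 < ε) :
    ∃ q : Fin n → ℚ,
      ((fun i => (q i : ℝ)) : Fin n → ℝ) ∈
        Submodule.span ℝ ((fun q : Fin n → ℚ => ((fun i => (q i : ℝ)) : Fin n → ℝ)) '' S) ∧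
      dist ((fun i => (q i : ℝ)) : Fin n → ℝ) y < ε := by
  classical
  set f := castQR n
  set castS : Set (Fin n → ℝ) := (fun q : Fin n → ℚ => ((fun i => (q i : ℝ)) : Fin n → ℝ)) '' S
  set M : Submodule ℚ (Fin n → ℝ) := Submodule.span ℚ castS
  set Mc : Submodule ℚ (Fin n → ℝ) := M.topologicalClosure
  -- Mc is closed under ℝ-smul
  have hsmul : ∀ (r : ℝ), ∀ x ∈ Mc, r • x ∈ Mc := by
    intro r x hx
    have hcl : IsClosed ((fun t : ℝ => t • x) ⁻¹' (Mc : Set (Fin n → ℝ))) :=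
      IsClosed.preimage (continuous_id.smul continuous_const) M.isClosed_topologicalClosure
    have hsub : Set.range ((↑) : ℚ → ℝ) ⊆ (fun t : ℝ => t • x) ⁻¹' (Mc : Set (Fin n → ℝ)) := by
      rintro _ ⟨q, rfl⟩
      simp only [Set.mem_preimage, SetLike.mem_coe]
      rw [ratCast_smul_eq ℝ ℚ]
      exact Mc.smul_mem q hx
    have : (Set.univ : Set ℝ) ⊆ (fun t : ℝ => t • x) ⁻¹' (Mc : Set (Fin n → ℝ)) := by
      rw [← Rat.denseRange_cast.closure_eq]
      exact hcl.closure_subset_iff.2 hsub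
    exact this (Set.mem_univ r)
  -- the real span is inside Mc
  have hspan : Submodule.span ℝ castS ≤ Submodule.span ℝ castS := le_refl _
  have hsub2 : (Submodule.span ℝ castS : Set (Fin n → ℝ)) ⊆ (Mc : Set (Fin n → ℝ)) := by
    intro z hz
    induction hz using Submodule.span_induction with
    | mem x hx => exact M.le_topologicalClosure (Submodule.subset_span hx)
    | zero => exact Mc.zero_mem
    | add x y _ _ hx hy => exact Mc.add_mem hx hy
    | smul r x _ hx => exact hsmul r x hx
  -- so y is in the closure of M
  have hyc : y ∈ closure (M : Set (Fin n → ℝ)) := hsub2 hy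
  rw [Metric.mem_closure_iff] at hyc
  obtain ⟨z, hzM, hdist⟩ := hyc (ε := ε) hε
  -- z = cast of a rational point
  have : M = Submodule.map f (Submodule.span ℚ S) := by
    rw [Submodule.map_span]
    rfl
  rw [this] at hzM
  obtain ⟨q, hq, rfl⟩ := hzM
  refine ⟨q, ?_, by rwa [dist_comm] at hdist⟩
  -- cast q ∈ span ℝ castS
  have : Submodule.map f (Submodule.span ℚ S) ≤
      (Submodule.span ℝ castS).restrictScalars ℚ := by
    rw [Submodule.map_span]
    rw [Submodule.span_le]
    intro w hw
    exact Submodule.subset_span hw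
  exact this ⟨q, hq, rfl⟩

lemma rat_inverse (n : ℕ) (v : Fin n → (Fin n → ℚ))
    (hli : LinearIndependent ℝ (fun j => ((fun i => ((v j i : ℝ))) : Fin n → ℝ))) :
    ∃ K : ℝ, 0 < K ∧ ∀ e : Fin n → ℚ, ∃ δ : Fin n → ℚ,
      (∑ j, (δ j : ℝ) • ((fun i => ((v j i : ℝ))) : Fin n → ℝ)) = (fun i => (e i : ℝ)) ∧
      ∀ j, |(δ j : ℝ)| ≤ K * ‖((fun i => (e i : ℝ)) : Fin n → ℝ)‖ := by
  classical
  set V : Fin n → (Fin n → ℝ) := fun j => ((fun i => ((v j i : ℝ))) : Fin n → ℝ) with hV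
  -- real linear map
  let f : (Fin n → ℝ) →ₗ[ℝ] (Fin n → ℝ) :=
    { toFun := fun c => ∑ j, c j • V j
      map_add' := by intro a b; simp [add_smul, Finset.sum_add_distrib]
      map_smul' := by intro r a; simp [smul_smul, Finset.smul_sum] }
  have hfinj : Function.Injective f := by
    rw [← LinearMap.ker_eq_bot, LinearMap.ker_eq_bot']
    intro c hc
    have := (Fintype.linearIndependent_iff.1 hli) c hc
    funext j; exact this j
  have hfsurj : Function.Surjective f := (LinearMap.injective_iff_surjective).1 hfinj
  let equiv := LinearEquiv.ofBijective f ⟨hfinj, hfsurj⟩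
  let T : (Fin n → ℝ) →L[ℝ] (Fin n → ℝ) :=
    LinearMap.toContinuousLinearMap (equiv.symm : (Fin n → ℝ) →ₗ[ℝ] (Fin n → ℝ))
  -- rational linear map
  let g : (Fin n → ℚ) →ₗ[ℚ] (Fin n → ℚ) :=
    { toFun := fun c => ∑ j, c j • v j
      map_add' := by intro a b; simp [add_smul, Finset.sum_add_distrib]
      map_smul' := by intro r a; simp [smul_smul, Finset.smul_sum] }
  have hcastg : ∀ c : Fin n → ℚ,
      (fun i => ((g c) i : ℝ)) = ∑ j, (c j : ℝ) • V j := by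
    intro c
    funext i
    show ((∑ j, c j • v j) i : ℝ) = _
    rw [Finset.sum_apply]
    push_cast
    rw [Finset.sum_apply]
    exact Finset.sum_congr rfl fun j _ => by simp [hV, smul_eq_mul]
  have hginj : Function.Injective g := by
    rw [← LinearMap.ker_eq_bot, LinearMap.ker_eq_bot']
    intro c hc
    have h0 : (∑ j, (c j : ℝ) • V j) = 0 := by
      rw [← hcastg c, hc]
      funext i; simp
    have := (Fintype.linearIndependent_iff.1 hli) (fun j => (c j : ℝ)) h0
    funext j
    have h5 := this j
    simpa using h5
  have hgsurj : Function.Surjective g := (LinearMap.injective_iff_surjective).1 hginj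
  refine ⟨‖T‖ + 1, by positivity, fun e => ?_⟩
  obtain ⟨δ, hδ⟩ := hgsurj e
  have heq : (∑ j, (δ j : ℝ) • V j) = (fun i => (e i : ℝ)) := by
    rw [← hcastg δ, hδ]
  refine ⟨δ, heq, fun j => ?_⟩
  have hTe : (fun j => (δ j : ℝ)) = T (fun i => (e i : ℝ)) := by
    have hfe : f (fun j => (δ j : ℝ)) = (fun i => (e i : ℝ)) := heq
    have : equiv (fun j => (δ j : ℝ)) = (fun i => (e i : ℝ)) := hfe
    have h2 := congrArg equiv.symm this
    rw [LinearEquiv.symm_apply_apply] at h2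
    exact h2
  have h3 : |(δ j : ℝ)| ≤ ‖((fun j => (δ j : ℝ)) : Fin n → ℝ)‖ := by
    have h6 := norm_le_pi_norm ((fun j => (δ j : ℝ)) : Fin n → ℝ) j
    rwa [Real.norm_eq_abs] at h6
  have h4 : ‖T ((fun i => (e i : ℝ)) : Fin n → ℝ)‖ ≤ ‖T‖ * ‖((fun i => (e i : ℝ)) : Fin n → ℝ)‖ :=
    T.le_opNorm _
  calc |(δ j : ℝ)| ≤ ‖((fun j => (δ j : ℝ)) : Fin n → ℝ)‖ := h3
    _ = ‖T ((fun i => (e i : ℝ)) : Fin n → ℝ)‖ := by rw [hTe]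
    _ ≤ ‖T‖ * ‖((fun i => (e i : ℝ)) : Fin n → ℝ)‖ := h4
    _ ≤ (‖T‖ + 1) * ‖((fun i => (e i : ℝ)) : Fin n → ℝ)‖ := by
        apply mul_le_mul_of_nonneg_right (by linarith) (norm_nonneg _)

lemma common_den {ι : Type*} (t : Finset ι) (c : ι → ℚ) (hc : ∀ i ∈ t, 0 ≤ c i) :
    ∃ N : ℕ, 0 < N ∧ ∀ i ∈ t, ∃ m : ℕ, (N : ℚ) * c i = m := by
  classical
  refine ⟨∏ i ∈ t, (c i).den, Finset.prod_pos (fun i _ => (c i).den_pos), fun i hi => ?_⟩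
  have hsplit : (∏ j ∈ t, ((c j).den : ℚ)) = (∏ j ∈ t.erase i, ((c j).den : ℚ)) * ((c i).den : ℚ) :=
    (Finset.prod_erase_mul t (fun j => ((c j).den : ℚ)) hi).symm
  have hdne : ((c i).den : ℚ) ≠ 0 := by exact_mod_cast (c i).den_pos.ne'
  have hden : ((c i).den : ℚ) * c i = (c i).num := by
    have h := Rat.num_div_den (c i)
    rw [div_eq_iff hdne] at h
    rw [h]; ring
  have hnum : (0 : ℤ) ≤ (c i).num := Rat.num_nonneg.2 (hc i hi)
  refine ⟨(∏ j ∈ t.erase i, (c j).den) * (c i).num.toNat, ?_⟩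
  have htn : ((c i).num.toNat : ℚ) = ((c i).num : ℚ) := by
    exact_mod_cast congrArg (fun z : ℤ => (z : ℚ)) (Int.toNat_of_nonneg hnum)
  push_cast
  rw [hsplit, mul_assoc, hden, htn]

lemma semigroup_sum {n : ℕ} (Γ : Set (Fin n → ℕ))
    (hsemi : ∀ x ∈ Γ, ∀ y ∈ Γ, x + y ∈ Γ)
    {ι : Type*} (t : Finset ι) (m : ι → ℕ) (γ : ι → (Fin n → ℕ))
    (hγ : ∀ i ∈ t, γ i ∈ Γ) :
    (∑ i ∈ t, m i • γ i) ∈ Γ ∨ (∑ i ∈ t, m i • γ i) = 0 := by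
  classical
  let M : AddSubmonoid (Fin n → ℕ) :=
    { carrier := {x | x ∈ Γ ∨ x = 0}
      add_mem' := by
        rintro a b (ha | rfl) (hb | rfl)
        · exact Or.inl (hsemi a ha b hb)
        · simpa using Or.inl ha
        · simpa using Or.inl hb
        · simp
      zero_mem' := Or.inr rfl }
  have : (∑ i ∈ t, m i • γ i) ∈ M := by
    apply sum_mem
    intro i hi
    exact AddSubmonoid.nsmul_mem M (Or.inl (hγ i hi)) (m i)
  exact this
lemma rat_point_mem (n : ℕ) (Γ : Set (Fin n → ℕ))
    (hsemi : ∀ x ∈ Γ, ∀ y ∈ Γ, x + y ∈ Γ)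
    (L : Submodule ℝ (Fin n → ℝ))
    (q : Fin n → ℚ) (hq0 : q ≠ 0)
    (hqL : ((fun i => (q i : ℝ)) : Fin n → ℝ) ∈ L)
    (hqint : ((fun i => (q i : ℝ)) : Fin n → ℝ) ∈ interior (closedConvexConeGen
      ((fun x : Fin n → ℕ => ((fun i => (x i : ℝ)) : Fin n → ℝ)) '' Γ))) :
    ((fun i => (q i : ℝ)) : Fin n → ℝ) ∈ closedConvexConeGen
      ((fun x : Fin n → ℕ => ((fun i => (x i : ℝ)) : Fin n → ℝ)) ''
        {x ∈ Γ | ((fun i => (x i : ℝ)) : Fin n → ℝ) ∈ L}) := by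
  classical
  set cN : (Fin n → ℕ) → (Fin n → ℝ) := fun x => fun i => (x i : ℝ) with hcN
  set G0 : Set (Fin n → ℝ) := (fun x : Fin n → ℕ => ((fun i => (x i : ℝ)) : Fin n → ℝ)) '' Γ
    with hG0
  set qR : Fin n → ℝ := (fun i => (q i : ℝ)) with hqR
  -- step 1 : span is everything
  have hspan : Submodule.span ℝ G0 = ⊤ := by
    have hsub : closedConvexConeGen G0 ⊆ (Submodule.span ℝ G0 : Set (Fin n → ℝ)) := by
      apply ccc_min
      · exact Submodule.subset_span
      · exact (Submodule.span ℝ G0).closed_of_finiteDimensional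
      · exact (Submodule.span ℝ G0).convex
      · intro r _ x hx; exact Submodule.smul_mem _ r hx
    apply Submodule.eq_top_of_nonempty_interior'
    exact ⟨qR, interior_mono hsub hqint⟩
  -- step 2 : a basis inside G0
  obtain ⟨b, hbsub, hbspan, hbli⟩ := exists_linearIndependent ℝ G0
  rw [hspan] at hbspan
  have hbfin : b.Finite := hbli.setFinite
  haveI : Fintype b := hbfin.fintype
  have hcard : Fintype.card b = n := by
    have hb : Module.Basis b ℝ (Fin n → ℝ) := Module.Basis.mk hbli (by rw [Subtype.range_coe, hbspan])
    have h1 := Module.finrank_eq_card_basis hb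
    have h2 : Module.finrank ℝ (Fin n → ℝ) = n := Module.finrank_fin_fun ℝ
    omega
  let eb : Fin n ≃ b := (Fintype.equivFinOfCardEq hcard).symm
  have hpre : ∀ v : b, ∃ g : Fin n → ℕ, g ∈ Γ ∧ cN g = (v : Fin n → ℝ) := by
    intro v
    obtain ⟨g, hg, hgc⟩ := hbsub v.2
    exact ⟨g, hg, hgc⟩
  choose gb hgbΓ hgbc using hpre
  set G : Fin n → (Fin n → ℕ) := fun j => gb (eb j) with hG
  set vQ : Fin n → (Fin n → ℚ) := fun j => fun i => ((G j i : ℚ)) with hvQ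
  have hVcast : ∀ j, ((fun i => ((vQ j i : ℝ))) : Fin n → ℝ) = cN (G j) := by
    intro j; funext i; simp [hvQ, hcN]
  have hli2 : LinearIndependent ℝ (fun j => ((fun i => ((vQ j i : ℝ))) : Fin n → ℝ)) := by
    have heq : (fun j => ((fun i => ((vQ j i : ℝ))) : Fin n → ℝ))
        = fun j => ((eb j : Fin n → ℝ)) := by
      funext j
      rw [hVcast j, hgbc (eb j)]
    rw [heq]
    exact hbli.comp eb (Equiv.injective eb)
  obtain ⟨K, hK, hKall⟩ := rat_inverse n vQ hli2
  -- step 3 : ball inside the cone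
  obtain ⟨r, hr, hball⟩ := Metric.isOpen_iff.1 isOpen_interior qR hqint
  set SV : Fin n → ℝ := ∑ j, cN (G j) with hSV
  obtain ⟨ε, hε0, hεr⟩ := exists_rat_btwn (show (0:ℝ) < r / (‖SV‖ + 1) by positivity)
  have hε0' : (0:ℚ) < ε := by exact_mod_cast hε0
  have hεSV : (ε : ℝ) * ‖SV‖ < r := by
    have h1 : (ε:ℝ) * (‖SV‖ + 1) < r / (‖SV‖ + 1) * (‖SV‖ + 1) := by
      apply mul_lt_mul_of_pos_right hεr (by positivity)
    rw [div_mul_cancel₀ _ (by positivity : ‖SV‖ + 1 ≠ 0)] at h1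
    nlinarith [norm_nonneg SV]
  set qt : Fin n → ℝ := qR - (ε:ℝ) • SV with hqt
  have hqtSig : qt ∈ closedConvexConeGen G0 := by
    apply interior_subset
    apply hball
    rw [Metric.mem_ball, dist_eq_norm]
    have : qt - qR = -((ε:ℝ) • SV) := by rw [hqt]; abel
    rw [this, norm_neg, norm_smul, Real.norm_eq_abs, abs_of_pos hε0]
    exact hεSV
  -- step 4 : approximate qt by a conic combination
  set η : ℝ := (ε:ℝ) / (2*K + 2) with hη
  have hη0 : 0 < η := by positivity
  have hqtcl : qt ∈ closure (conicH G0) := by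
    rw [← ccc_eq_closure_conicH]; exact hqtSig
  obtain ⟨p, hpC, hpd⟩ := Metric.mem_closure_iff.1 hqtcl η hη0
  obtain ⟨ι, t, w, z, hw0, hzin, hpeq⟩ := conicH_mem_elim G0 hpC
  have hzpre : ∀ i : ι, ∃ γ : Fin n → ℕ, i ∈ t → (γ ∈ Γ ∧ cN γ = z i) := by
    intro i
    by_cases h : i ∈ t
    · obtain ⟨γ, hγ, hγc⟩ := hzin i h
      exact ⟨γ, fun _ => ⟨hγ, hγc⟩⟩
    · exact ⟨0, fun h' => absurd h' h⟩
  choose γN hγN using hzpre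
  set B : ℝ := ∑ i ∈ t, ‖z i‖ with hB
  have hB0 : 0 ≤ B := Finset.sum_nonneg fun i _ => norm_nonneg _
  set τ : ℝ := η / (B + 1) with hτ
  have hτ0 : 0 < τ := by positivity
  have hμex : ∀ i : ι, ∃ μi : ℚ, 0 ≤ μi ∧ (i ∈ t → ((μi:ℝ) ≤ w i ∧ w i - (μi:ℝ) ≤ τ)) := by
    intro i
    by_cases h : i ∈ t
    · rcases eq_or_lt_of_le (hw0 i h) with h0 | h0
      · exact ⟨0, le_refl 0, fun _ => by simp [← h0, hτ0.le]⟩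
      · obtain ⟨μi, hμ1, hμ2⟩ := exists_rat_btwn
          (show max (w i - τ) 0 < w i by
            rw [max_lt_iff]; exact ⟨by linarith, h0⟩)
        refine ⟨μi, ?_, fun _ => ⟨le_of_lt hμ2, by
          have := le_max_left (w i - τ) 0
          linarith [lt_of_le_of_lt this hμ1]⟩⟩
        have := le_max_right (w i - τ) 0
        exact_mod_cast le_of_lt (lt_of_le_of_lt this hμ1)
    · exact ⟨0, le_refl 0, fun h' => absurd h' h⟩
  choose μ hμ0 hμt using hμex
  -- the rational error vector
  set eQ : Fin n → ℚ := fun i' => q i' - ε * (∑ j, (G j i' : ℚ)) - ∑ i ∈ t, μ i * (γN i i' : ℚ)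
    with heQ
  have hecast : ((fun i' => (eQ i' : ℝ)) : Fin n → ℝ) = qt - ∑ i ∈ t, (μ i : ℝ) • z i := by
    funext i0
    show ((eQ i0 : ℝ)) = (qt - ∑ i ∈ t, (μ i : ℝ) • z i) i0
    have hL : ((eQ i0 : ℝ))
        = (q i0 : ℝ) - (ε:ℝ) * (∑ j, ((G j i0 : ℝ))) - ∑ i ∈ t, (μ i : ℝ) * ((γN i i0 : ℝ)) := by
      simp only [heQ]
      push_cast
      ring
    have hR : (qt - ∑ i ∈ t, (μ i : ℝ) • z i) i0
        = (q i0 : ℝ) - (ε:ℝ) * (∑ j, ((G j i0 : ℝ))) - ∑ i ∈ t, (μ i : ℝ) * z i i0 := by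
      simp only [hqt, hqR, Pi.sub_apply, Pi.smul_apply, smul_eq_mul, hSV, Finset.sum_apply]
      rfl
    rw [hL, hR]
    have hzz : ∀ i ∈ t, (μ i : ℝ) * ((γN i i0 : ℝ)) = (μ i : ℝ) * z i i0 := by
      intro i hi
      congr 1
      exact congrFun (hγN i hi).2 i0
    rw [Finset.sum_congr rfl hzz]
  -- norm bound on the error
  have henorm : ‖((fun i' => (eQ i' : ℝ)) : Fin n → ℝ)‖ < 2 * η := by
    rw [hecast]
    have hsum : ∑ i ∈ t, (w i - (μ i : ℝ)) • z i
        = ∑ i ∈ t, w i • z i - ∑ i ∈ t, (μ i : ℝ) • z i := by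
      rw [← Finset.sum_sub_distrib]
      apply Finset.sum_congr rfl
      intro i _
      rw [sub_smul]
    have hsplit : qt - ∑ i ∈ t, (μ i : ℝ) • z i
        = (qt - p) + ∑ i ∈ t, (w i - (μ i : ℝ)) • z i := by
      rw [hpeq, hsum]
      abel
    rw [hsplit]
    have h1 : ‖qt - p‖ < η := by rwa [← dist_eq_norm]
    have h2 : ‖∑ i ∈ t, (w i - (μ i : ℝ)) • z i‖ ≤ τ * B := by
      calc ‖∑ i ∈ t, (w i - (μ i : ℝ)) • z i‖ ≤ ∑ i ∈ t, ‖(w i - (μ i : ℝ)) • z i‖ :=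
            norm_sum_le _ _
        _ ≤ ∑ i ∈ t, τ * ‖z i‖ := by
            apply Finset.sum_le_sum
            intro i hi
            rw [norm_smul, Real.norm_eq_abs]
            apply mul_le_mul_of_nonneg_right _ (norm_nonneg _)
            rw [abs_of_nonneg (by linarith [(hμt i hi).1])]
            exact (hμt i hi).2
        _ = τ * B := by rw [hB, Finset.mul_sum]
    have h3 : τ * B < η := by
      rw [hτ]
      rw [div_mul_eq_mul_div, div_lt_iff₀ (by positivity)]
      nlinarith
    calc ‖(qt - p) + ∑ i ∈ t, (w i - (μ i : ℝ)) • z i‖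
        ≤ ‖qt - p‖ + ‖∑ i ∈ t, (w i - (μ i : ℝ)) • z i‖ := norm_add_le _ _
      _ < η + η := by linarith
      _ = 2 * η := by ring
  -- solve for the correction δ
  obtain ⟨δ, hδeq, hδb⟩ := hKall eQ
  have hδsmall : ∀ j, |(δ j : ℝ)| < (ε : ℝ) := by
    intro j
    calc |(δ j : ℝ)| ≤ K * ‖((fun i' => (eQ i' : ℝ)) : Fin n → ℝ)‖ := hδb j
      _ < K * (2 * η) := by
          apply mul_lt_mul_of_pos_left henorm hK
      _ ≤ (ε : ℝ) := by
          have h2K : (0:ℝ) < 2*K+2 := by positivity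
          have heq2 : K * (2 * ((ε:ℝ) / (2*K+2))) = (ε:ℝ) * (2*K) / (2*K+2) := by ring
          rw [hη, heq2, div_le_iff₀ h2K]
          nlinarith [hε0]
  have hδnn : ∀ j, (0:ℚ) ≤ ε + δ j := by
    intro j
    have := hδsmall j
    have h1 : -(ε:ℝ) < (δ j : ℝ) := by
      rw [abs_lt] at this; exact this.1
    have : (0:ℝ) < (ε:ℝ) + (δ j : ℝ) := by linarith
    exact_mod_cast le_of_lt this
  -- assemble the full rational conic representation of q
  set D : Finset (ι ⊕ Fin n) := t.disjSum Finset.univ with hD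
  set coef : ι ⊕ Fin n → ℚ := Sum.elim μ (fun j => ε + δ j) with hcoef
  set vec : ι ⊕ Fin n → (Fin n → ℕ) := Sum.elim γN G with hvec
  have hcoef0 : ∀ s ∈ D, 0 ≤ coef s := by
    rintro (i | j) _
    · exact hμ0 i
    · exact hδnn j
  have hvecΓ : ∀ s ∈ D, vec s ∈ Γ := by
    rintro (i | j) hs
    · rw [hD, Finset.inl_mem_disjSum] at hs
      exact (hγN i hs).1
    · exact hgbΓ (eb j)
  have hrepr : qR = ∑ s ∈ D, (coef s : ℝ) • cN (vec s) := by
    rw [hD, Finset.sum_disjSum]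
    have h1 : ∑ i ∈ t, ((coef (Sum.inl i) : ℝ)) • cN (vec (Sum.inl i))
        = ∑ i ∈ t, (μ i : ℝ) • z i := by
      apply Finset.sum_congr rfl
      intro i hi
      simp only [hcoef, hvec, Sum.elim_inl]
      rw [(hγN i hi).2]
    have h2 : ∑ j : Fin n, ((coef (Sum.inr j) : ℝ)) • cN (vec (Sum.inr j))
        = (ε:ℝ) • SV + ((fun i' => (eQ i' : ℝ)) : Fin n → ℝ) := by
      have : ∀ j, ((coef (Sum.inr j) : ℝ)) • cN (vec (Sum.inr j))
          = (ε:ℝ) • cN (G j) + (δ j : ℝ) • cN (G j) := by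
        intro j
        simp only [hcoef, hvec, Sum.elim_inr]
        push_cast
        rw [add_smul]
      rw [Finset.sum_congr rfl (fun j _ => this j), Finset.sum_add_distrib]
      have hA : ∑ j : Fin n, (ε:ℝ) • cN (G j) = (ε:ℝ) • SV := by
        rw [hSV, Finset.smul_sum]
      have hB : ∑ j : Fin n, (δ j : ℝ) • cN (G j)
          = ((fun i' => (eQ i' : ℝ)) : Fin n → ℝ) := by
        rw [← hδeq]
        apply Finset.sum_congr rfl
        intro j _
        rw [hVcast j]
      rw [hA, hB]
    rw [h1, h2, hecast]
    rw [hqt]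
    abel
  -- clear denominators
  obtain ⟨N, hN0, hNm⟩ := common_den D coef hcoef0
  have hmex : ∀ s : ι ⊕ Fin n, ∃ ms : ℕ, s ∈ D → (N : ℚ) * coef s = ms := by
    intro s
    by_cases h : s ∈ D
    · obtain ⟨ms, hms⟩ := hNm s h
      exact ⟨ms, fun _ => hms⟩
    · exact ⟨0, fun h' => absurd h' h⟩
  choose m hm using hmex
  set wN : Fin n → ℕ := ∑ s ∈ D, m s • vec s with hwN
  have hwcast : cN wN = (N:ℝ) • qR := by
    funext i0
    have hL : cN wN i0 = ∑ s ∈ D, ((m s : ℝ)) * ((vec s i0 : ℝ)) := by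
      show ((wN i0 : ℝ)) = _
      rw [hwN, Finset.sum_apply]
      push_cast
      apply Finset.sum_congr rfl
      intro s _
      have h4 : (m s • vec s) i0 = m s * vec s i0 := rfl
      rw [h4]
      push_cast
      ring
    have hR : ((N:ℝ) • qR) i0 = ∑ s ∈ D, (N:ℝ) * ((coef s : ℝ)) * ((vec s i0 : ℝ)) := by
      have hrep0 : qR i0 = ∑ s ∈ D, ((coef s : ℝ)) * ((vec s i0 : ℝ)) := by
        rw [hrepr, Finset.sum_apply]
        apply Finset.sum_congr rfl
        intro s _
        rfl
      rw [Pi.smul_apply, smul_eq_mul, hrep0, Finset.mul_sum]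
      apply Finset.sum_congr rfl
      intro s _
      ring
    rw [hL, hR]
    apply Finset.sum_congr rfl
    intro s hs
    have hms : ((m s : ℝ)) = (N:ℝ) * ((coef s : ℝ)) := by
      have h0 := hm s hs
      have : (((N : ℚ) * coef s : ℚ) : ℝ) = ((m s : ℚ) : ℝ) := by rw [h0]
      push_cast at this
      linarith [this]
    rw [hms]
  have hq0R : qR ≠ 0 := by
    intro h
    apply hq0
    funext i
    have h5 : qR i = 0 := by rw [h]; rfl
    rw [hqR] at h5
    simpa using h5
  have hwne : wN ≠ 0 := by
    intro h
    apply hq0R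
    have h1 : cN wN = 0 := by
      rw [h]
      funext i; simp [hcN]
    rw [hwcast] at h1
    have hN0' : (N:ℝ) ≠ 0 := by exact_mod_cast hN0.ne'
    exact (smul_eq_zero.1 h1).resolve_left hN0'
  have hwΓ : wN ∈ Γ := (semigroup_sum Γ hsemi D m vec hvecΓ).resolve_right hwne
  have hwL : cN wN ∈ L := by
    rw [hwcast]
    exact L.smul_mem _ hqL
  -- conclude
  have hmem : cN wN ∈ (fun x : Fin n → ℕ => ((fun i => (x i : ℝ)) : Fin n → ℝ)) ''
      {x ∈ Γ | ((fun i => (x i : ℝ)) : Fin n → ℝ) ∈ L} := ⟨wN, ⟨hwΓ, hwL⟩, rfl⟩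
  have hfinal : qR = ((N:ℝ))⁻¹ • cN wN := by
    rw [hwcast, smul_smul, inv_mul_cancel₀ (by exact_mod_cast hN0.ne' : (N:ℝ) ≠ 0), one_smul]
  show qR ∈ _
  rw [hfinal]
  exact ccc_smul_mem _ (by positivity) (subset_ccc _ hmem)

/-- Let `Γ ⊆ ℕ^n` be a sub-semigroup generating a subgroup of finite index
in `ℤ^n`, let `Σ(Γ)` be the closed convex cone it generates, and let `L ⊆ ℝ^n` be a
linear subspace defined over `ℚ` meeting the interior of `Σ(Γ)`.
Then `Σ(Γ) ∩ L` equals the closed convex cone generated by `Γ ∩ L`. -/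
theorem cone_meets_rational_subspace
    (n : ℕ) (Γ : Set (Fin n → ℕ))
    (hsemi : ∀ x ∈ Γ, ∀ y ∈ Γ, x + y ∈ Γ)
    (hfin : (AddSubgroup.closure
        ((fun x : Fin n → ℕ => ((fun i => (x i : ℤ)) : Fin n → ℤ)) '' Γ)).index ≠ 0)
    (L : Submodule ℝ (Fin n → ℝ))
    (hQ : ∃ S : Set (Fin n → ℚ),
      L = Submodule.span ℝ ((fun q : Fin n → ℚ => ((fun i => (q i : ℝ)) : Fin n → ℝ)) '' S))
    (hmeet : ((L : Set (Fin n → ℝ)) ∩ interior (closedConvexConeGen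
        ((fun x : Fin n → ℕ => ((fun i => (x i : ℝ)) : Fin n → ℝ)) '' Γ))).Nonempty) :
    closedConvexConeGen ((fun x : Fin n → ℕ => ((fun i => (x i : ℝ)) : Fin n → ℝ)) '' Γ)
        ∩ (L : Set (Fin n → ℝ))
      = closedConvexConeGen
          ((fun x : Fin n → ℕ => ((fun i => (x i : ℝ)) : Fin n → ℝ)) ''
            {x ∈ Γ | ((fun i => (x i : ℝ)) : Fin n → ℝ) ∈ L}) := by
  classical
  obtain ⟨S, hS⟩ := hQ
  set cN : (Fin n → ℕ) → (Fin n → ℝ) := fun x => fun i => (x i : ℝ) with hcN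
  obtain ⟨u, huL, huint⟩ := hmeet
  set Sig : Set (Fin n → ℝ) := closedConvexConeGen (cN '' Γ) with hSig
  set R : Set (Fin n → ℝ) :=
    closedConvexConeGen (cN '' {x ∈ Γ | cN x ∈ L}) with hR
  have huS : u ∈ Sig := interior_subset huint
  rcases Nat.eq_zero_or_pos n with hn | hn
  · -- degenerate case n = 0
    subst hn
    haveI : Subsingleton (Fin 0 → ℝ) := ⟨fun a b => funext fun i => absurd i.2 (by omega)⟩
    have hΓne : Γ.Nonempty := by
      by_contra hΓ
      rw [Set.not_nonempty_iff_eq_empty] at hΓ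
      have hempty : Sig ⊆ (∅ : Set (Fin 0 → ℝ)) := by
        apply ccc_min
        · rw [hΓ]; simp
        · exact isClosed_empty
        · exact convex_empty
        · intro r _ x hx; exact absurd hx (Set.notMem_empty x)
      exact hempty huS
    obtain ⟨γ, hγ⟩ := hΓne
    have hγL : cN γ ∈ L := by
      rw [Subsingleton.elim (cN γ) 0]
      exact L.zero_mem
    have hmemR : cN γ ∈ R := subset_ccc _ ⟨γ, ⟨hγ, hγL⟩, rfl⟩
    ext z
    constructor
    · intro _
      rw [← Subsingleton.elim (cN γ) z]
      exact hmemR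
    · intro _
      rw [← Subsingleton.elim u z]
      exact ⟨huS, huL⟩
  -- main case n ≥ 1
  haveI : Nonempty (Fin n) := ⟨⟨0, hn⟩⟩
  -- R ⊆ Sig ∩ L
  have hRL : R ⊆ Sig ∩ (L : Set (Fin n → ℝ)) := by
    apply ccc_min
    · rintro _ ⟨x, ⟨hxΓ, hxL⟩, rfl⟩
      exact ⟨subset_ccc _ ⟨x, hxΓ, rfl⟩, hxL⟩
    · exact (ccc_isClosed _).inter L.closed_of_finiteDimensional
    · exact (ccc_convex _).inter L.convex
    · rintro r hr x ⟨h1, h2⟩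
      exact ⟨ccc_smul_mem _ hr h1, L.smul_mem r h2⟩
  -- Sig is inside the nonnegative orthant
  have horth : Sig ⊆ {x : Fin n → ℝ | ∀ i, 0 ≤ x i} := by
    apply ccc_min
    · rintro _ ⟨x, _, rfl⟩ i
      exact Nat.cast_nonneg _
    · have : {x : Fin n → ℝ | ∀ i, 0 ≤ x i} = ⋂ i, {x : Fin n → ℝ | 0 ≤ x i} := by
        ext x; simp
      rw [this]
      exact isClosed_iInter fun i => isClosed_le continuous_const (continuous_apply i)
    · intro x hx y hy a b ha hb hab i
      have := hx i
      have := hy i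
      simp only [Pi.add_apply, Pi.smul_apply, smul_eq_mul]
      nlinarith
    · intro r hr x hx i
      simpa using mul_nonneg hr (hx i)
  -- zero is not in the interior
  have h0int : (0 : Fin n → ℝ) ∉ interior Sig := by
    intro h0
    obtain ⟨ρ, hρ, hball⟩ := Metric.isOpen_iff.1 isOpen_interior 0 h0
    set y : Fin n → ℝ := fun _ => -(ρ/2) with hy
    have hyball : y ∈ Metric.ball (0 : Fin n → ℝ) ρ := by
      rw [Metric.mem_ball, dist_zero_right, hy]
      have : ‖(fun _ : Fin n => -(ρ/2))‖ = ‖-(ρ/2)‖ := pi_norm_const _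
      rw [this, norm_neg, Real.norm_eq_abs, abs_of_pos (by positivity)]
      linarith
    have := horth (interior_subset (hball hyball)) ⟨0, hn⟩
    simp only [hy] at this
    linarith
  -- interior points of Sig lying on L are in R
  have hA : ∀ y : Fin n → ℝ, y ∈ (L : Set (Fin n → ℝ)) → y ∈ interior Sig → y ∈ R := by
    intro y hyL hyint
    have hy0 : y ≠ 0 := fun h => h0int (h ▸ hyint)
    have hynorm : 0 < ‖y‖ := norm_pos_iff.2 hy0
    obtain ⟨ρ, hρ, hball⟩ := Metric.isOpen_iff.1 isOpen_interior y hyint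
    rw [hR, ← (ccc_isClosed (cN '' {x ∈ Γ | cN x ∈ L})).closure_eq]
    rw [Metric.mem_closure_iff]
    intro ε hε
    set ε' : ℝ := min (min ε ρ) ‖y‖ with hε'
    have hε'0 : 0 < ε' := lt_min (lt_min hε hρ) hynorm
    obtain ⟨q, hqL, hqd⟩ := rat_dense_in_span S (y := y) (hS ▸ hyL) hε'0
    have hqLL : ((fun i => (q i : ℝ)) : Fin n → ℝ) ∈ L := by rw [hS]; exact hqL
    have hqint : ((fun i => (q i : ℝ)) : Fin n → ℝ) ∈ interior Sig := by
      apply hball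
      rw [Metric.mem_ball]
      calc dist ((fun i => (q i : ℝ)) : Fin n → ℝ) y < ε' := hqd
        _ ≤ ρ := le_trans (min_le_left _ _) (min_le_right _ _)
    have hq0 : q ≠ 0 := by
      intro h
      have hc : ((fun i => (q i : ℝ)) : Fin n → ℝ) = 0 := by
        funext i; rw [h]; simp
      rw [hc, dist_comm, dist_zero_right] at hqd
      have : ε' ≤ ‖y‖ := min_le_right _ _
      linarith
    have hmem := rat_point_mem n Γ hsemi L q hq0 hqLL hqint
    exact ⟨(fun i => (q i : ℝ)), hmem, by
      rw [dist_comm]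
      calc dist ((fun i => (q i : ℝ)) : Fin n → ℝ) y < ε' := hqd
        _ ≤ ε := le_trans (min_le_left _ _) (min_le_left _ _)⟩
  -- conclude
  apply Set.eq_of_subset_of_subset
  · rintro x ⟨hxS, hxL⟩
    show x ∈ R
    rw [hR, ← (ccc_isClosed (cN '' {x ∈ Γ | cN x ∈ L})).closure_eq]
    rw [Metric.mem_closure_iff]
    intro ε hε
    set t : ℝ := min 1 (ε / (2 * (‖u - x‖ + 1))) with ht
    have ht0 : 0 < t := lt_min one_pos (by positivity)
    have ht1 : t ≤ 1 := min_le_left _ _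
    set yt : Fin n → ℝ := t • u + (1 - t) • x with hyt
    have hytint : yt ∈ interior Sig :=
      (ccc_convex _).combo_interior_self_mem_interior huint hxS ht0 (by linarith) (by ring)
    have hytL : yt ∈ (L : Set (Fin n → ℝ)) :=
      L.add_mem (L.smul_mem t huL) (L.smul_mem (1 - t) hxL)
    have hytR : yt ∈ R := hA yt hytL hytint
    refine ⟨yt, hytR, ?_⟩
    have hdiff : x - yt = t • (x - u) := by
      rw [hyt]
      rw [smul_sub, sub_smul, one_smul]
      abel
    rw [dist_eq_norm, hdiff, norm_smul, Real.norm_eq_abs, abs_of_pos ht0]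
    have h2 : t ≤ ε / (2 * (‖u - x‖ + 1)) := min_le_right _ _
    have h3 : ‖x - u‖ = ‖u - x‖ := by rw [← norm_neg]; congr 1; abel
    have h4 : t * ‖x - u‖ ≤ (ε / (2 * (‖u - x‖ + 1))) * ‖u - x‖ := by
      rw [h3]
      exact mul_le_mul_of_nonneg_right h2 (norm_nonneg _)
    have h5 : (ε / (2 * (‖u - x‖ + 1))) * ‖u - x‖ < ε := by
      rw [div_mul_eq_mul_div, div_lt_iff₀ (by positivity)]
      nlinarith [norm_nonneg (u - x)]
    linarith
  · exact fun x hx => hRL hx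
end

section
/- Let Σ ⊆ ℝ^n be a full-dimensional cone written as the closure of an increasing union of closed convex cones Σ¹ ⊆ Σ² ⊆ ⋯. Then the interior of Σ equals the union of the interiors of the Σⁱ, provided each Σⁱ is a closed convex cone and Σ = closure(⋃ᵢ Σⁱ). -/
open Set Metric

/-- An increasing union of convex sets is convex. -/
lemma convex_iUnion_of_monotone {E : Type*} [AddCommGroup E] [Module ℝ E]
    (S : ℕ → Set E) (hmono : Monotone S) (hconv : ∀ i, Convex ℝ (S i)) :
    Convex ℝ (⋃ i, S i) := by
  intro x hx y hy a b ha hb hab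
  obtain ⟨_, ⟨i, rfl⟩, hxi⟩ := hx
  obtain ⟨_, ⟨j, rfl⟩, hyj⟩ := hy
  exact mem_iUnion.2 ⟨max i j,
    hconv (max i j) (hmono (le_max_left i j) hxi) (hmono (le_max_right i j) hyj) ha hb hab⟩

/-- Baire-type lemma: if an open ball is covered by countably many closed sets, then one of
them has nonempty interior meeting the ball. -/
lemma exists_interior_mem_of_ball_subset {E : Type*} [NormedAddCommGroup E] [CompleteSpace E]
    (S : ℕ → Set E) (hclosed : ∀ i, IsClosed (S i)) {x : E} {ε : ℝ} (hε : 0 < ε)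
    (hball : ball x ε ⊆ ⋃ i, S i) :
    ∃ M, ∃ z, z ∈ interior (S M) := by
  set F : ℕ → Set E := fun i => S i ∪ {y | ε ≤ dist y x} with hF
  have hFclosed : ∀ i, IsClosed (F i) := fun i =>
    (hclosed i).union (isClosed_le continuous_const (continuous_id.dist continuous_const))
  have hFcover : (⋃ i, F i) = univ := by
    apply eq_univ_of_forall
    intro y
    by_cases hy : y ∈ ball x ε
    · obtain ⟨_, ⟨i, rfl⟩, hyi⟩ := hball hy
      exact mem_iUnion.2 ⟨i, Or.inl hyi⟩
    · exact mem_iUnion.2 ⟨0, Or.inr (not_lt.1 (fun h => hy (mem_ball.2 h)))⟩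
  have hdense := dense_iUnion_interior_of_closed hFclosed hFcover
  obtain ⟨z, hz1, hz2⟩ := hdense.exists_mem_open isOpen_ball ⟨x, mem_ball_self hε⟩
  obtain ⟨_, ⟨M, rfl⟩, hzM⟩ := hz1
  refine ⟨M, z, ?_⟩
  have hopen : IsOpen (interior (F M) ∩ ball x ε) := isOpen_interior.inter isOpen_ball
  have hsub : interior (F M) ∩ ball x ε ⊆ S M := by
    rintro w ⟨hw1, hw2⟩
    rcases interior_subset hw1 with hw | hw
    · exact hw
    · exact absurd (mem_ball.1 hw2) (not_lt.2 hw)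
  exact interior_maximal hsub hopen ⟨hzM, hz2⟩

/-- If `Σ¹ ⊆ Σ² ⊆ ⋯` is an increasing sequence of closed convex cones in
`ℝ^n` and `Σ` is the closure of their union, then `int(Σ) = ⋃ᵢ int(Σⁱ)`. -/
theorem interior_closure_iUnion_of_cones
    (n : ℕ) (S : ℕ → Set (Fin n → ℝ))
    (hmono : Monotone S)
    (hclosed : ∀ i, IsClosed (S i))
    (hconv : ∀ i, Convex ℝ (S i))
    (hcone : ∀ i, ∀ r : ℝ, 0 ≤ r → ∀ x ∈ S i, r • x ∈ S i) :
    interior (closure (⋃ i, S i)) = ⋃ i, interior (S i) := by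
  set T : Set (Fin n → ℝ) := ⋃ i, S i with hT
  have hTconv : Convex ℝ T := convex_iUnion_of_monotone S hmono hconv
  apply Subset.antisymm
  · intro x hx
    -- Step 1: `interior T` is nonempty.
    have hspan_cl : affineSpan ℝ (closure T) = ⊤ :=
      (hTconv.closure.interior_nonempty_iff_affineSpan_eq_top).1 ⟨x, hx⟩
    have hspan : affineSpan ℝ T = ⊤ := by
      have h1 : closure T ⊆ (affineSpan ℝ T : Set (Fin n → ℝ)) :=
        closure_minimal (subset_affineSpan ℝ T) (affineSpan ℝ T).closed_of_finiteDimensional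
      have h2 : affineSpan ℝ (closure T) ≤ affineSpan ℝ T := affineSpan_le.2 h1
      exact top_le_iff.1 (hspan_cl ▸ h2)
    obtain ⟨z0, hz0⟩ := hTconv.interior_nonempty_iff_affineSpan_eq_top.2 hspan
    -- Step 2: `x ∈ interior T`.
    have hxT : x ∈ interior T := by
      obtain ⟨δ, hδpos, hδ⟩ := Metric.isOpen_iff.1 isOpen_interior x hx
      set t : ℝ := δ / (dist x z0 + 1) with ht
      have htpos : 0 < t := div_pos hδpos (by positivity)
      have h1t : (0:ℝ) < 1 + t := by linarith
      have hab : t / (1 + t) + 1 / (1 + t) = 1 := by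
        rw [← add_div, add_comm, div_self h1t.ne']
      have hx' : x + t • (x - z0) ∈ closure T := by
        apply interior_subset
        apply hδ
        rw [mem_ball]
        have : dist (x + t • (x - z0)) x = t * dist x z0 := by
          rw [dist_eq_norm, add_sub_cancel_left, norm_smul, Real.norm_eq_abs,
            abs_of_pos htpos, dist_eq_norm]
        rw [this, ht]
        calc δ / (dist x z0 + 1) * dist x z0 < δ / (dist x z0 + 1) * (dist x z0 + 1) := by
              apply mul_lt_mul_of_pos_left (lt_add_one _) htpos
          _ = δ := div_mul_cancel₀ δ (by positivity)
      have hcombo : (t / (1 + t)) • z0 + (1 / (1 + t)) • (x + t • (x - z0)) = x := by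
        clear_value t
        rw [div_eq_inv_mul, div_eq_inv_mul, mul_smul, mul_smul, ← smul_add]
        rw [show t • z0 + (1:ℝ) • (x + t • (x - z0)) = (1 + t) • x by module]
        rw [smul_smul, inv_mul_cancel₀ h1t.ne', one_smul]
      have := hTconv.combo_interior_closure_mem_interior (a := t / (1 + t)) (b := 1 / (1 + t))
        hz0 hx' (div_pos htpos h1t) (by positivity) hab
      rwa [hcombo] at this
    -- Step 3: some `S M` has an interior point `z`.
    obtain ⟨δ, hδpos, hδ⟩ := Metric.isOpen_iff.1 isOpen_interior x hxT
    have hballT : ball x δ ⊆ ⋃ i, S i := fun y hy => interior_subset (hδ hy)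
    obtain ⟨M, z, hz⟩ := exists_interior_mem_of_ball_subset S hclosed hδpos hballT
    -- Step 4: push `x` slightly past itself away from `z`, landing in some `S K`.
    set t : ℝ := δ / (dist x z + 1) with ht
    have htpos : 0 < t := div_pos hδpos (by positivity)
    have h1t : (0:ℝ) < 1 + t := by linarith
    have hab : t / (1 + t) + 1 / (1 + t) = 1 := by
      rw [← add_div, add_comm, div_self h1t.ne']
    have hx' : x + t • (x - z) ∈ T := by
      apply interior_subset
      apply hδ
      rw [mem_ball]
      have : dist (x + t • (x - z)) x = t * dist x z := by
        rw [dist_eq_norm, add_sub_cancel_left, norm_smul, Real.norm_eq_abs,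
          abs_of_pos htpos, dist_eq_norm]
      rw [this, ht]
      calc δ / (dist x z + 1) * dist x z < δ / (dist x z + 1) * (dist x z + 1) := by
            apply mul_lt_mul_of_pos_left (lt_add_one _) htpos
        _ = δ := div_mul_cancel₀ δ (by positivity)
    obtain ⟨_, ⟨K, rfl⟩, hK⟩ := hx'
    -- Step 5: combine in `S N` with `N = max M K`.
    set N := max M K with hN
    have hzN : z ∈ interior (S N) := interior_mono (hmono (le_max_left M K)) hz
    have hKN : x + t • (x - z) ∈ S N := hmono (le_max_right M K) hK
    have hcombo : (t / (1 + t)) • z + (1 / (1 + t)) • (x + t • (x - z)) = x := by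
      clear_value t
      rw [div_eq_inv_mul, div_eq_inv_mul, mul_smul, mul_smul, ← smul_add]
      rw [show t • z + (1:ℝ) • (x + t • (x - z)) = (1 + t) • x by module]
      rw [smul_smul, inv_mul_cancel₀ h1t.ne', one_smul]
    have := (hconv N).combo_interior_self_mem_interior (a := t / (1 + t)) (b := 1 / (1 + t))
      hzN hKN (div_pos htpos h1t) (by positivity) hab
    rw [hcombo] at this
    exact mem_iUnion.2 ⟨N, this⟩
  · refine iUnion_subset fun i => ?_
    exact interior_mono ((subset_iUnion S i).trans subset_closure)
end

section
/- Let Γ ⊆ ℕ^k be a finitely generated semigroup generating ℤ^k as a group, and let Σ ⊆ ℝ^k be the closed convex cone it spans. Then there exists z ∈ Γ such that every integer vector in the translated cone z + Σ belongs to Γ, i.e. (z + Σ) ∩ ℤ^k ⊆ Γ. -/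
open Finset Set

variable {E : Type*} [AddCommGroup E] [Module ℝ E]

/-- The set of nonnegative combinations of elements of a finset. -/
def coneCombos (t : Finset E) : Set E :=
  {x | ∃ f : E → ℝ, (∀ i, 0 ≤ f i) ∧ x = ∑ i ∈ t, f i • i}

lemma coneCombos_mono {t u : Finset E} (h : t ⊆ u) : coneCombos t ⊆ coneCombos u := by
  classical
  rintro x ⟨f, hf, rfl⟩
  refine ⟨fun i => if i ∈ t then f i else 0, fun i => by dsimp; split <;> simp [hf], ?_⟩
  rw [← Finset.sum_subset h (fun i _ hi => by simp [hi])]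
  exact Finset.sum_congr rfl fun i hi => by simp [hi]

lemma coneCombos_erase [DecidableEq E] {t : Finset E}
    (h : ¬ LinearIndependent ℝ ((↑) : t → E)) {x : E} (hx : x ∈ coneCombos t) :
    ∃ y ∈ t, x ∈ coneCombos (t.erase y) := by
  obtain ⟨f, hf, rfl⟩ := hx
  obtain ⟨g, hg0, ⟨i₁, hi₁⟩⟩ := Fintype.not_linearIndependent_iff.1 h
  set G : E → ℝ := fun z => if hz : z ∈ t then g ⟨z, hz⟩ else 0 with hG
  have hGsum : ∀ c : ℝ, ∑ i ∈ t, (c * G i) • i = 0 := by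
    intro c
    rw [← Finset.sum_attach t (fun i => (c * G i) • i)]
    have hcong : ∀ i ∈ t.attach, (c * G i.1) • (i.1 : E) = c • (g i • (i : E)) := by
      intro i _
      simp only [hG]
      rw [dif_pos i.2, mul_smul, Subtype.coe_eta]
    rw [Finset.sum_congr rfl hcong, ← Finset.smul_sum, ← Finset.univ_eq_attach, hg0, smul_zero]
  -- WLOG some G positive
  have key : ∀ G : E → ℝ, (∀ c : ℝ, ∑ i ∈ t, (c * G i) • i = 0) → (∃ i ∈ t, 0 < G i) →
      ∃ y ∈ t, (∑ i ∈ t, f i • i) ∈ coneCombos (t.erase y) := by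
    intro G hGs ⟨i₂, hi₂t, hi₂⟩
    have hne : (t.filter (fun i => 0 < G i)).Nonempty := ⟨i₂, by simp [hi₂t, hi₂]⟩
    obtain ⟨y, hy, hymin⟩ := Finset.exists_min_image _ (fun i => f i / G i) hne
    simp only [Finset.mem_filter] at hy
    have hGy : 0 < G y := hy.2
    set lam := f y / G y with hlam
    have hlam0 : 0 ≤ lam := div_nonneg (hf y) hGy.le
    have hf' : ∀ i ∈ t, 0 ≤ f i - lam * G i := by
      intro i hi
      rcases le_or_gt (G i) 0 with hGi | hGi
      · nlinarith [hf i]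
      · have h3 := mul_le_mul_of_nonneg_right (hymin i (Finset.mem_filter.2 ⟨hi, hGi⟩)) hGi.le
        rw [div_mul_cancel₀ _ hGi.ne'] at h3
        linarith
    have hfy : f y - lam * G y = 0 := by
      rw [hlam, div_mul_cancel₀ _ hGy.ne', sub_self]
    refine ⟨y, hy.1, ⟨fun i => if i ∈ t.erase y then f i - lam * G i else 0,
      fun i => by dsimp; split <;> [exact hf' i (Finset.mem_of_mem_erase ‹_›); simp], ?_⟩⟩
    have : ∑ i ∈ t.erase y, (if i ∈ t.erase y then f i - lam * G i else 0) • i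
        = ∑ i ∈ t.erase y, (f i - lam * G i) • i :=
      Finset.sum_congr rfl fun i hi => by simp [hi]
    rw [this]
    have h2 : ∑ i ∈ t, (f i - lam * G i) • i = ∑ i ∈ t, f i • i := by
      have := hGs lam
      simp only [sub_smul, Finset.sum_sub_distrib]
      rw [this, sub_zero]
    rw [← Finset.add_sum_erase t _ hy.1] at h2
    rw [hfy, zero_smul, zero_add] at h2
    exact h2.symm
  rcases lt_trichotomy (G i₁) 0 with hneg | hzero | hpos
  · refine key (fun i => - G i) (fun c => by simpa using hGsum (-c)) ⟨i₁, i₁.2, by simpa using hneg⟩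
  · exact absurd (by simpa [hG, i₁.2] using hzero) hi₁
  · exact key G hGsum ⟨i₁, i₁.2, hpos⟩

lemma coneCombos_caratheodory [DecidableEq E] (t : Finset E) {x : E} (hx : x ∈ coneCombos t) :
    ∃ u : Finset E, u ⊆ t ∧ LinearIndependent ℝ ((↑) : u → E) ∧ x ∈ coneCombos u := by
  induction t using Finset.strongInductionOn with
  | _ t ih =>
    by_cases h : LinearIndependent ℝ ((↑) : t → E)
    · exact ⟨t, subset_rfl, h, hx⟩
    · obtain ⟨y, hy, hx'⟩ := coneCombos_erase h hx
      obtain ⟨u, hu, hind, hxu⟩ := ih (t.erase y) (Finset.erase_ssubset hy) hx'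
      exact ⟨u, hu.trans (Finset.erase_subset _ _), hind, hxu⟩

lemma coneCombos_isClosed_of_li {E : Type*} [NormedAddCommGroup E]
    [NormedSpace ℝ E] [FiniteDimensional ℝ E] {u : Finset E}
    (h : LinearIndependent ℝ ((↑) : u → E)) : IsClosed (coneCombos u) := by
  classical
  set φ := LinearMap.lsum ℝ (fun _ : u => ℝ) ℕ (fun i : u => LinearMap.id.smulRight (i : E))
    with hφ
  have hker : LinearMap.ker φ = ⊥ := Fintype.linearIndependent_iff'.1 h
  have hφapp : ∀ g : u → ℝ, φ g = ∑ i : u, g i • (i : E) := by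
    intro g
    simp [hφ, LinearMap.lsum_apply]
  have hemb : Topology.IsClosedEmbedding φ := LinearMap.isClosedEmbedding_of_injective hker
  have himg : coneCombos u = φ '' {g : u → ℝ | ∀ i, 0 ≤ g i} := by
    ext x
    constructor
    · rintro ⟨f, hf, rfl⟩
      refine ⟨fun i => f i, fun i => hf i, ?_⟩
      rw [hφapp, Finset.univ_eq_attach, Finset.sum_attach u (fun i => f i • i)]
    · rintro ⟨g, hg, rfl⟩
      refine ⟨fun z => if hz : z ∈ u then g ⟨z, hz⟩ else 0,
        fun z => by dsimp; split <;> [exact hg _; exact le_refl 0], ?_⟩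
      rw [hφapp, ← Finset.sum_attach u (fun i => (if hz : i ∈ u then g ⟨i, hz⟩ else 0) • i),
        Finset.univ_eq_attach]
      exact Finset.sum_congr rfl fun i _ => by rw [dif_pos i.2, Subtype.coe_eta]
  rw [himg]
  refine hemb.isClosedMap _ ?_
  have : {g : u → ℝ | ∀ i, 0 ≤ g i} = ⋂ i, {g : u → ℝ | 0 ≤ g i} := by
    ext g; simp [Set.mem_iInter]
  rw [this]
  exact isClosed_iInter fun i => isClosed_le continuous_const (continuous_apply i)

lemma coneCombos_isClosed {E : Type*} [NormedAddCommGroup E]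
    [NormedSpace ℝ E] [FiniteDimensional ℝ E] (t : Finset E) : IsClosed (coneCombos t) := by
  classical
  have hunion : coneCombos t =
      ⋃ u ∈ {u : Finset E | u ⊆ t ∧ LinearIndependent ℝ ((↑) : u → E)}, coneCombos u := by
    ext x
    simp only [Set.mem_iUnion, Set.mem_setOf_eq]
    constructor
    · intro hx
      obtain ⟨u, hu, hind, hxu⟩ := coneCombos_caratheodory t hx
      exact ⟨u, ⟨hu, hind⟩, hxu⟩
    · rintro ⟨u, ⟨hu, -⟩, hxu⟩
      exact coneCombos_mono hu hxu
  rw [hunion]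
  refine Set.Finite.isClosed_biUnion ?_ fun u hu => coneCombos_isClosed_of_li hu.2
  exact (t.powerset.finite_toSet).subset fun u hu => Finset.mem_powerset.2 hu.1

lemma coneCombos_zero_mem (t : Finset E) : (0 : E) ∈ coneCombos t :=
  ⟨0, fun _ => le_refl 0, by simp⟩

lemma coneCombos_add_mem {t : Finset E} {x y : E} (hx : x ∈ coneCombos t)
    (hy : y ∈ coneCombos t) : x + y ∈ coneCombos t := by
  obtain ⟨f, hf, rfl⟩ := hx
  obtain ⟨g, hg, rfl⟩ := hy
  exact ⟨f + g, fun i => add_nonneg (hf i) (hg i), by simp [add_smul, Finset.sum_add_distrib]⟩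

lemma coneCombos_smul_mem {t : Finset E} {x : E} {r : ℝ} (hr : 0 ≤ r)
    (hx : x ∈ coneCombos t) : r • x ∈ coneCombos t := by
  obtain ⟨f, hf, rfl⟩ := hx
  exact ⟨r • f, fun i => mul_nonneg hr (hf i), by simp [Finset.smul_sum, smul_smul]⟩

lemma coneCombos_self_mem [DecidableEq E] {t : Finset E} {a : E} (ha : a ∈ t) :
    a ∈ coneCombos t := by
  refine ⟨fun z => if z = a then 1 else 0, fun z => by dsimp; split <;> norm_num, ?_⟩
  have : ∀ i ∈ t, (if i = a then (1 : ℝ) else 0) • i = if i = a then i else 0 := by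
    intro i _; split <;> simp
  rw [Finset.sum_congr rfl this, Finset.sum_ite_eq' t a (fun i => i), if_pos ha]

lemma coneCombos_convex (t : Finset E) : Convex ℝ (coneCombos t) :=
  fun _ hx _ hy a b ha hb _ =>
    coneCombos_add_mem (coneCombos_smul_mem ha hx) (coneCombos_smul_mem hb hy)

/-- Khovanskii: Let `Γ ⊆ ℕ^k` be a finitely generated semigroup generating
`ℤ^k` as a group, and `Σ` the closed convex cone it spans.  Then there is `z ∈ Γ` such
that every integer vector in the translated cone `z + Σ` belongs to `Γ`. -/
theorem khovanskii_translated_cone_in_semigroup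
    (k : ℕ) (Γ : Set (Fin k → ℕ))
    (hfg : ∃ s : Finset (Fin k → ℕ),
      Γ = (AddSubmonoid.closure (s : Set (Fin k → ℕ)) : Set (Fin k → ℕ)))
    (hgen : AddSubgroup.closure
        ((fun x : Fin k → ℕ => ((fun i => (x i : ℤ)) : Fin k → ℤ)) '' Γ) = ⊤) :
    ∃ z ∈ Γ, ∀ w : Fin k → ℤ,
      (((fun i => (w i : ℝ)) - (fun i => (z i : ℝ)) : Fin k → ℝ) ∈
        closedConvexConeGen ((fun x : Fin k → ℕ => ((fun i => (x i : ℝ)) : Fin k → ℝ)) '' Γ)) →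
      ∃ g ∈ Γ, ∀ i, (g i : ℤ) = w i := by
  classical
  obtain ⟨s, hΓ⟩ := hfg
  set ρ : (Fin k → ℕ) → (Fin k → ℝ) := fun x => fun i => (x i : ℝ) with hρ
  have hρinj : Function.Injective ρ := by
    intro a b hab
    funext i
    exact Nat.cast_injective (congrFun hab i)
  set t : Finset (Fin k → ℝ) := s.image ρ with ht
  -- basic membership facts for Γ
  have hΓ0 : (0 : Fin k → ℕ) ∈ Γ := by
    rw [hΓ]; exact (AddSubmonoid.closure _).zero_mem
  have hΓadd : ∀ {x y : Fin k → ℕ}, x ∈ Γ → y ∈ Γ → x + y ∈ Γ := by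
    intro x y hx hy
    rw [hΓ] at hx hy ⊢
    exact add_mem hx hy
  -- Step 1 : the closed convex cone generated by ρ '' Γ is contained in coneCombos t
  have hsub : (fun x : Fin k → ℕ => ((fun i => (x i : ℝ)) : Fin k → ℝ)) '' Γ ⊆ coneCombos t := by
    rintro - ⟨γ, hγ, rfl⟩
    rw [hΓ] at hγ
    induction hγ using AddSubmonoid.closure_induction with
    | mem x hx => exact coneCombos_self_mem (Finset.mem_image_of_mem ρ hx)
    | zero => convert coneCombos_zero_mem t using 1; funext i; simp
    | add x y hx hy ihx ihy =>
        have : (fun i => ((x + y) i : ℝ)) = (fun i => (x i : ℝ)) + fun i => (y i : ℝ) := by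
          funext i; simp [Pi.add_apply]
        beta_reduce
        rw [this]
        exact coneCombos_add_mem ihx ihy
  have hconesub : closedConvexConeGen
      ((fun x : Fin k → ℕ => ((fun i => (x i : ℝ)) : Fin k → ℝ)) '' Γ) ⊆ coneCombos t := by
    intro x hx
    exact hx (coneCombos t)
      ⟨hsub, coneCombos_isClosed t, coneCombos_convex t, fun r hr x hx => coneCombos_smul_mem hr hx⟩
  -- Step 2 : every integer vector becomes an element of Γ after adding some element of Γ
  have claim2 : ∀ w : Fin k → ℤ, ∃ c, c ∈ Γ ∧ ∃ p, p ∈ Γ ∧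
      (fun i => ((p i : ℤ))) = w + fun i => ((c i : ℤ)) := by
    intro w
    have hw : w ∈ AddSubgroup.closure
        ((fun x : Fin k → ℕ => ((fun i => (x i : ℤ)) : Fin k → ℤ)) '' Γ) := by
      rw [hgen]; trivial
    induction hw using AddSubgroup.closure_induction with
    | mem x hx =>
        obtain ⟨γ, hγ, rfl⟩ := hx
        exact ⟨0, hΓ0, γ, hγ, by funext i; simp⟩
    | zero => exact ⟨0, hΓ0, 0, hΓ0, by funext i; simp⟩
    | add x y hx hy ihx ihy =>
        obtain ⟨c₁, hc₁, p₁, hp₁, he₁⟩ := ihx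
        obtain ⟨c₂, hc₂, p₂, hp₂, he₂⟩ := ihy
        refine ⟨c₁ + c₂, hΓadd hc₁ hc₂, p₁ + p₂, hΓadd hp₁ hp₂, ?_⟩
        funext i
        have h1 := congrFun he₁ i
        have h2 := congrFun he₂ i
        simp only [Pi.add_apply] at h1 h2 ⊢
        push_cast
        omega
    | neg x hx ihx =>
        obtain ⟨c₁, hc₁, p₁, hp₁, he₁⟩ := ihx
        refine ⟨p₁, hp₁, c₁, hc₁, ?_⟩
        funext i
        have h1 := congrFun he₁ i
        simp only [Pi.add_apply, Pi.neg_apply] at h1 ⊢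
        omega
  -- Step 3 : the set of integer points in the fundamental box is finite
  set N : Fin k → ℕ := fun j => ⌈∑ i ∈ t, |i j|⌉₊ with hN
  set F : Set (Fin k → ℤ) := {d | ∃ f : (Fin k → ℝ) → ℝ, (∀ i, 0 ≤ f i ∧ f i ≤ 1) ∧
      (fun j => (d j : ℝ)) = ∑ i ∈ t, f i • i} with hFdef
  have hF : F.Finite := by
    refine Set.Finite.subset (Set.Finite.pi fun j => Set.finite_Icc (-(N j : ℤ)) (N j)) ?_
    rintro d ⟨f, hf, hd⟩
    have hdj : ∀ j, |(d j : ℝ)| ≤ N j := by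
      intro j
      have := congrFun hd j
      simp only [Finset.sum_apply, Pi.smul_apply, smul_eq_mul] at this
      rw [this]
      calc |∑ i ∈ t, f i * i j| ≤ ∑ i ∈ t, |f i * i j| := Finset.abs_sum_le_sum_abs _ _
        _ ≤ ∑ i ∈ t, |i j| := by
            refine Finset.sum_le_sum fun i _ => ?_
            rw [abs_mul]
            have h1 : |f i| ≤ 1 := abs_le.2 ⟨by linarith [(hf i).1], (hf i).2⟩
            nlinarith [abs_nonneg (i j)]
        _ ≤ N j := Nat.le_ceil _
    intro j _
    have h := abs_le.1 (hdj j)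
    simp only [Set.mem_Icc]
    exact ⟨by exact_mod_cast h.1, by exact_mod_cast h.2⟩
  -- choose translating elements for every integer vector
  choose c hc p hp hcp using claim2
  refine ⟨∑ d ∈ hF.toFinset, c d, ?_, ?_⟩
  · rw [hΓ]
    exact AddSubmonoid.sum_mem _ fun d _ => by rw [← SetLike.mem_coe, ← hΓ]; exact hc d
  · intro w hw
    set z : Fin k → ℕ := ∑ d ∈ hF.toFinset, c d with hzdef
    obtain ⟨f, hf, hfe⟩ := hconesub hw
    set g : (Fin k → ℝ) → ℕ := fun i => ⌊f i⌋₊ with hg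
    set P : Fin k → ℕ := ∑ a ∈ s, g (ρ a) • a with hP
    have hPΓ : P ∈ Γ := by
      rw [hΓ]
      exact AddSubmonoid.sum_mem _ fun a ha =>
        AddSubmonoid.nsmul_mem _ (AddSubmonoid.subset_closure ha) _
    -- the coordinates of P
    have hPcoord : ∀ j, (P j : ℝ) = ∑ i ∈ t, (g i : ℝ) * i j := by
      intro j
      rw [ht, Finset.sum_image (fun a _ b _ h => hρinj h)]
      rw [hP]
      push_cast [Finset.sum_apply, Pi.smul_apply, smul_eq_mul]
      rfl
    -- coordinates of z as sums
    have hzcoord : ∀ j, (z j : ℤ) = ∑ d ∈ hF.toFinset, ((c d) j : ℤ) := by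
      intro j
      rw [hzdef]
      push_cast [Finset.sum_apply]
      rfl
    -- the remainder vector
    set r : Fin k → ℤ := fun j => w j - (z j : ℤ) - (P j : ℤ) with hr
    have hwz : ∀ j, (w j : ℝ) - (z j : ℝ) = ∑ i ∈ t, f i * i j := by
      intro j
      have := congrFun hfe j
      simpa [Finset.sum_apply, Pi.smul_apply, smul_eq_mul] using this
    have hrF : r ∈ F := by
      refine ⟨fun i => f i - (g i : ℝ), fun i => ?_, ?_⟩
      · constructor
        · have := Nat.floor_le (hf i)
          simp only [hg]
          linarith
        · have := Nat.lt_floor_add_one (f i)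
          simp only [hg]
          linarith
      · funext j
        simp only [hr, Finset.sum_apply, Pi.smul_apply, smul_eq_mul]
        push_cast
        rw [hwz j, hPcoord j]
        rw [← Finset.sum_sub_distrib]
        exact Finset.sum_congr rfl fun i _ => by ring
    have hrmem : r ∈ hF.toFinset := hF.mem_toFinset.2 hrF
    -- the final element of Γ
    refine ⟨P + p r + ∑ d ∈ hF.toFinset.erase r, c d, ?_, ?_⟩
    · refine hΓadd (hΓadd hPΓ (hp r)) ?_
      rw [hΓ]
      exact AddSubmonoid.sum_mem _ fun d _ => by rw [← SetLike.mem_coe, ← hΓ]; exact hc d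
    · intro i
      have hpr := congrFun (hcp r) i
      simp only [Pi.add_apply] at hpr
      have hsum : ((c r) i : ℤ) + ∑ d ∈ hF.toFinset.erase r, ((c d) i : ℤ)
          = (z i : ℤ) := by
        rw [hzcoord i, ← Finset.add_sum_erase _ _ hrmem]
      have hPsum : ((∑ d ∈ hF.toFinset.erase r, c d) i : ℤ)
          = ∑ d ∈ hF.toFinset.erase r, ((c d) i : ℤ) := by
        push_cast [Finset.sum_apply]
        rfl
      simp only [Pi.add_apply]
      push_cast
      rw [hPsum, hpr]
      have : r i = w i - (z i : ℤ) - (P i : ℤ) := rfl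
      omega
end

section
/- Let Γ ⊆ ℕ² be defined by Γ = {(0,0)} ∪ {(k,m) : m ≥ 1, 0 ≤ k ≤ mc − g} for integers c ≥ 2g+1, g ≥ 1. Then Γ is a sub-semigroup of ℕ² that is not finitely generated, and the unit slice of the closed convex cone it generates is the interval [0,c]. -/
/-- For integers `g ≥ 1`, `c ≥ 2g+1`, the set
`Γ = {(0,0)} ∪ {(k,m) : m ≥ 1, 0 ≤ k ≤ mc − g}` (the condition written additively as
`k + g ≤ mc`) is a sub-semigroup of `ℕ²` which is not finitely generated, and the unit
slice of the closed convex cone it generates is the interval `[0,c]`. -/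
theorem curve_semigroup_not_finitely_generated
    (g c : ℕ) (hg : 1 ≤ g) (hc : 2 * g + 1 ≤ c) :
    (∀ x ∈ ({(0, 0)} ∪ {p : ℕ × ℕ | 1 ≤ p.2 ∧ p.1 + g ≤ p.2 * c} : Set (ℕ × ℕ)),
     ∀ y ∈ ({(0, 0)} ∪ {p : ℕ × ℕ | 1 ≤ p.2 ∧ p.1 + g ≤ p.2 * c} : Set (ℕ × ℕ)),
      x + y ∈ ({(0, 0)} ∪ {p : ℕ × ℕ | 1 ≤ p.2 ∧ p.1 + g ≤ p.2 * c} : Set (ℕ × ℕ))) ∧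
    (¬ ∃ S : Finset (ℕ × ℕ),
      ({(0, 0)} ∪ {p : ℕ × ℕ | 1 ≤ p.2 ∧ p.1 + g ≤ p.2 * c} : Set (ℕ × ℕ))
        = (AddSubmonoid.closure (S : Set (ℕ × ℕ)) : Set (ℕ × ℕ))) ∧
    {x : ℝ | ((x, 1) : ℝ × ℝ) ∈ closedConvexConeGen
        ((fun p : ℕ × ℕ => (((p.1 : ℝ), (p.2 : ℝ)) : ℝ × ℝ)) ''
          ({(0, 0)} ∪ {p : ℕ × ℕ | 1 ≤ p.2 ∧ p.1 + g ≤ p.2 * c} : Set (ℕ × ℕ)))}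
      = Set.Icc (0 : ℝ) (c : ℝ) := by
  have hgc : g ≤ c := by omega
  set Γ : Set (ℕ × ℕ) :=
    ({(0, 0)} ∪ {p : ℕ × ℕ | 1 ≤ p.2 ∧ p.1 + g ≤ p.2 * c} : Set (ℕ × ℕ)) with hΓ
  -- closure under addition
  have hadd : ∀ x ∈ Γ, ∀ y ∈ Γ, x + y ∈ Γ := by
    rintro x hx y hy
    rcases hx with hx | hx
    · simp only [Set.mem_singleton_iff] at hx
      subst hx
      rw [show ((0, 0) : ℕ × ℕ) = 0 from rfl, zero_add]; exact hy
    · rcases hy with hy | hy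
      · simp only [Set.mem_singleton_iff] at hy
        subst hy
        rw [show ((0, 0) : ℕ × ℕ) = 0 from rfl, add_zero]; exact Or.inr hx
      · right
        refine ⟨by have h := hx.1; simp only [Prod.snd_add]; omega, ?_⟩
        calc (x + y).1 + g ≤ (x.1 + g) + (y.1 + g) := by
              simp only [Prod.fst_add]; omega
          _ ≤ x.2 * c + y.2 * c := add_le_add hx.2 hy.2
          _ = (x + y).2 * c := by simp only [Prod.snd_add, add_mul]
  refine ⟨hadd, ?_, ?_⟩
  · -- not finitely generated
    rintro ⟨S, hS⟩
    have hSΓ : (S : Set (ℕ × ℕ)) ⊆ Γ := by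
      rw [hS]; exact AddSubmonoid.subset_closure
    have hmemne : ∀ a : ℕ × ℕ, a ∈ Γ → a ≠ 0 → 1 ≤ a.2 ∧ a.1 + g ≤ a.2 * c := by
      rintro a (ha | ha) hne
      · exact absurd ha hne
      · exact ha
    -- decomposition lemma
    have ind : ∀ z, z ∈ AddSubmonoid.closure (S : Set (ℕ × ℕ)) →
        (z = 0 ∨ z ∈ (S : Set (ℕ × ℕ)) ∨
          ∃ a b : ℕ × ℕ, a ∈ Γ ∧ b ∈ Γ ∧ a ≠ 0 ∧ b ≠ 0 ∧ a + b = z) := by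
      intro z hz
      induction hz using AddSubmonoid.closure_induction with
      | mem w hw => exact Or.inr (Or.inl hw)
      | zero => exact Or.inl rfl
      | add x y hx hy px py =>
        by_cases hx0 : x = 0
        · subst hx0; simpa using py
        by_cases hy0 : y = 0
        · subst hy0; simpa using px
        refine Or.inr (Or.inr ⟨x, y, ?_, ?_, hx0, hy0, rfl⟩)
        · have hxc : x ∈ (AddSubmonoid.closure (S : Set (ℕ × ℕ)) : Set (ℕ × ℕ)) := hx
          rw [← hS] at hxc
          exact hxc
        · have hyc : y ∈ (AddSubmonoid.closure (S : Set (ℕ × ℕ)) : Set (ℕ × ℕ)) := hy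
          rw [← hS] at hyc
          exact hyc
    -- every element ((n+1)c - g, n+1) must lie in S
    have key : ∀ n : ℕ, ((n + 1) * c - g, n + 1) ∈ S := by
      intro n
      have hgle : g ≤ (n + 1) * c :=
        le_trans hgc (Nat.le_mul_of_pos_left c (Nat.succ_pos n))
      have hzΓ : ((n + 1) * c - g, n + 1) ∈ Γ := by
        right
        refine ⟨Nat.succ_le_succ (Nat.zero_le n), ?_⟩
        show (n + 1) * c - g + g ≤ (n + 1) * c
        omega
      have hzcl : ((n + 1) * c - g, n + 1) ∈ AddSubmonoid.closure (S : Set (ℕ × ℕ)) := by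
        rw [← SetLike.mem_coe, ← hS]; exact hzΓ
      rcases ind _ hzcl with h0 | hmem | ⟨a, b, haΓ, hbΓ, hane, hbne, habz⟩
      · exact absurd (congrArg Prod.snd h0) (by simp)
      · exact hmem
      · exfalso
        obtain ⟨ha2, ha1⟩ := hmemne a haΓ hane
        obtain ⟨hb2, hb1⟩ := hmemne b hbΓ hbne
        have h1 : a.1 + b.1 = (n + 1) * c - g := congrArg Prod.fst habz
        have h2 : a.2 + b.2 = n + 1 := congrArg Prod.snd habz
        have hmul : a.2 * c + b.2 * c = (n + 1) * c := by
          rw [← add_mul, h2]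
        omega
    -- contradiction with finiteness
    have : (S : Set (ℕ × ℕ)).Infinite := by
      refine Set.infinite_of_injective_forall_mem
        (f := fun n : ℕ => (((n + 1) * c - g, n + 1) : ℕ × ℕ)) ?_ ?_
      · intro m n hmn
        have := congrArg Prod.snd hmn
        simpa using this
      · intro n; exact key n
    exact this S.finite_toSet
  · -- the unit slice of the generated closed convex cone
    have hcpos : (0 : ℝ) < c := by
      have : (3 : ℕ) ≤ c := by omega
      exact_mod_cast lt_of_lt_of_le (by norm_num) this
    ext x
    simp only [Set.mem_setOf_eq, Set.mem_Icc]
    constructor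
    · intro hx
      -- use the enveloping cone C₀
      have hC₀ : ((x, 1) : ℝ × ℝ) ∈ {p : ℝ × ℝ | 0 ≤ p.1 ∧ p.1 ≤ p.2 * c} := by
        apply hx
        refine ⟨?_, ?_, ?_, ?_⟩
        · rintro _ ⟨p, hp, rfl⟩
          rcases hp with hp | hp
          · simp only [Set.mem_singleton_iff] at hp
            subst hp
            simp
          · obtain ⟨hp1, hp2⟩ := hp
            have hple : p.1 ≤ p.2 * c := le_trans (Nat.le_add_right _ _) hp2
            refine ⟨?_, ?_⟩
            · show (0 : ℝ) ≤ ((p.1 : ℕ) : ℝ)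
              exact_mod_cast Nat.zero_le p.1
            · show ((p.1 : ℕ) : ℝ) ≤ ((p.2 : ℕ) : ℝ) * c
              exact_mod_cast hple
        · have : {p : ℝ × ℝ | 0 ≤ p.1 ∧ p.1 ≤ p.2 * c}
              = {p : ℝ × ℝ | 0 ≤ p.1} ∩ {p : ℝ × ℝ | p.1 ≤ p.2 * c} := rfl
          rw [this]
          exact (isClosed_le continuous_const continuous_fst).inter
            (isClosed_le continuous_fst (continuous_snd.mul continuous_const))
        · rintro p ⟨hp1, hp2⟩ q ⟨hq1, hq2⟩ a b ha hb hab
          constructor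
          · have h1 := mul_nonneg ha hp1
            have h2 := mul_nonneg hb hq1
            simp only [Prod.fst_add, Prod.smul_fst, smul_eq_mul]
            linarith
          · have h1 := mul_le_mul_of_nonneg_left hp2 ha
            have h2 := mul_le_mul_of_nonneg_left hq2 hb
            simp only [Prod.fst_add, Prod.snd_add, Prod.smul_fst, Prod.smul_snd, smul_eq_mul]
            nlinarith
        · rintro r hr p ⟨hp1, hp2⟩
          constructor
          · exact mul_nonneg hr hp1
          · calc r • p.1 ≤ r * (p.2 * c) := mul_le_mul_of_nonneg_left hp2 hr
              _ = (r • p.2) * c := by simp [smul_eq_mul]; ring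
      exact ⟨hC₀.1, by simpa using hC₀.2⟩
    · rintro ⟨hx0, hxc⟩
      rintro C ⟨hCsub, hCcl, hCconv, hCcone⟩
      -- (0,1) ∈ C
      have h01 : ((0 : ℝ), (1 : ℝ)) ∈ C := by
        have : ((0 : ℕ), (1 : ℕ)) ∈ Γ := Or.inr ⟨le_refl 1, by omega⟩
        have := hCsub ⟨((0 : ℕ), (1 : ℕ)), this, rfl⟩
        simpa using this
      -- (c,1) ∈ C as a limit
      have hc1 : (((c : ℝ)), (1 : ℝ)) ∈ C := by
        set f : ℕ → ℝ × ℝ := fun n =>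
          (((n : ℝ) + 1)⁻¹) • (((((n + 1) * c - g : ℕ)) : ℝ), (((n + 1 : ℕ)) : ℝ)) with hf
        have hmemf : ∀ n, f n ∈ C := by
          intro n
          apply hCcone _ (by positivity)
          apply hCsub
          refine ⟨((n + 1) * c - g, n + 1), ?_, rfl⟩
          right
          have hgle : g ≤ (n + 1) * c :=
            le_trans hgc (Nat.le_mul_of_pos_left c (Nat.succ_pos n))
          refine ⟨Nat.succ_le_succ (Nat.zero_le n), ?_⟩
          show (n + 1) * c - g + g ≤ (n + 1) * c
          omega
        have hfeq : ∀ n : ℕ, f n = ((c : ℝ) - g * (((n : ℝ) + 1)⁻¹), 1) := by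
          intro n
          have hgle : g ≤ (n + 1) * c :=
            le_trans hgc (Nat.le_mul_of_pos_left c (Nat.succ_pos n))
          have hne : ((n : ℝ) + 1) ≠ 0 := by positivity
          have hcast : ((((n + 1) * c - g : ℕ)) : ℝ) = ((n : ℝ) + 1) * c - g := by
            push_cast [Nat.cast_sub hgle]
            ring
          rw [hf]
          simp only [Prod.smul_mk, smul_eq_mul, hcast]
          have h2 : ((n + 1 : ℕ) : ℝ) = (n : ℝ) + 1 := by push_cast; ring
          rw [h2]
          refine Prod.ext ?_ ?_
          · field_simp
          · field_simp
        have htend : Filter.Tendsto f Filter.atTop (nhds ((c : ℝ), 1)) := by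
          have h1 : Filter.Tendsto (fun n : ℕ => (c : ℝ) - g * (((n : ℝ) + 1)⁻¹))
              Filter.atTop (nhds ((c : ℝ) - g * 0)) := by
            apply Filter.Tendsto.const_sub
            apply Filter.Tendsto.const_mul
            have := tendsto_one_div_add_atTop_nhds_zero_nat (𝕜 := ℝ)
            simpa [one_div] using this
          have h2 : Filter.Tendsto (fun _ : ℕ => (1 : ℝ)) Filter.atTop (nhds 1) :=
            tendsto_const_nhds
          have := h1.prodMk_nhds h2
          simp only [mul_zero, sub_zero] at this
          convert this using 1
          ext n <;> simp [hfeq n]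
        exact hCcl.mem_of_tendsto htend (Filter.Eventually.of_forall hmemf)
      -- convex combination
      have ha : (0 : ℝ) ≤ 1 - x / c := by
        rw [sub_nonneg, div_le_one hcpos]
        exact hxc
      have hb : (0 : ℝ) ≤ x / c := div_nonneg hx0 (le_of_lt hcpos)
      have hab : (1 - x / c) + x / c = 1 := by ring
      have := hCconv h01 hc1 ha hb hab
      convert this using 1
      refine Prod.ext ?_ ?_
      · simp only [Prod.fst_add, Prod.smul_fst, smul_eq_mul]
        field_simp
        ring
      · simp only [Prod.snd_add, Prod.smul_snd, smul_eq_mul]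
        ring
end
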